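/- If an even multigraph H (all degrees even) with connected color class H(j) is detached at one vertex y by splitting off a new vertex taking exactly d_{H(j)}(y)/η(y) (an even integer) of y's color-j edge-endpoints, chosen so that from each component of H(j)∖{y} at most half of the color-j edges joining y to that component are moved to the new vertex, then the resulting color class remains connected. -/

import Mathlib

/-- Degree of `v` (loops count twice). -/
noncomputable def dDeg {V E : Type} (ends : E → V × V) (v : V) : ℕ :=
  Nat.card {e : E // (ends e).1 = v} + Nat.card {e : E // (ends e).2 = v}

/-- Two vertices are joined by some edge. -/
def dAdj {V E : Type} (ends : E → V × V) (a b : V) : Prop :=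
  ∃ e : E, ends e = (a, b) ∨ ends e = (b, a)

/-- `u` and `v` lie in the same component of the graph with the vertex `y` deleted. -/
def dReachAvoid {V E : Type} (ends : E → V × V) (y u v : V) : Prop :=
  Relation.ReflTransGen (fun a b => a ≠ y ∧ b ≠ y ∧ dAdj ends a b) u v

/-- `e` joins `y` to the component of `v` in the graph with `y` deleted. -/
def dJoinsComp {V E : Type} (ends : E → V × V) (y : V) (e : E) (v : V) : Prop :=
  ∃ u : V, u ≠ y ∧ (ends e = (y, u) ∨ ends e = (u, y)) ∧ dReachAvoid ends y u v

/-- Step (D2): let the (color class of the) finite multigraph `(V, E, ends)` be even and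
connected, and detach a new vertex `none : Option V` from `y`: `ends'` re-ends every
edge, replacing some occurrences of the endpoint `y` by the new vertex (at most one per
edge), so that the new vertex receives exactly `d(y)/η` edge-endpoints, an even positive
number, and so that from each component of the graph minus `y` at most half of the edges
joining `y` to that component are moved.  Then the resulting graph is still connected. -/
theorem detach_vertex_stays_connected {V E : Type} [Fintype V] [Fintype E]
    (ends : E → V × V) (y : V)
    (heven : ∀ v : V, Even (dDeg ends v))
    (hconn : ∀ u v : V, Relation.ReflTransGen (dAdj ends) u v)
    (ends' : E → Option V × Option V)
    (hproj : ∀ e : E, ((ends' e).1.getD y, (ends' e).2.getD y) = ends e)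
    (hone : ∀ e : E, ¬((ends' e).1 = none ∧ (ends' e).2 = none))
    (η : ℕ) (hη : 2 ≤ η)
    (hexact : (Nat.card {e : E // (ends' e).1 = none} +
        Nat.card {e : E // (ends' e).2 = none}) * η = dDeg ends y)
    (hevenMoved : Even (Nat.card {e : E // (ends' e).1 = none} +
        Nat.card {e : E // (ends' e).2 = none}))
    (hposMoved : 0 < Nat.card {e : E // (ends' e).1 = none} +
        Nat.card {e : E // (ends' e).2 = none})
    (hhalf : ∀ v : V, v ≠ y →
      2 * Nat.card {e : E // dJoinsComp ends y e v ∧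
          ((ends' e).1 = none ∨ (ends' e).2 = none)} ≤
        Nat.card {e : E // dJoinsComp ends y e v}) :
    ∀ x z : Option V, Relation.ReflTransGen (dAdj ends') x z := by
  classical
  have hRsymm : Symmetric (dAdj ends') := fun a b ⟨e, h⟩ => ⟨e, h.symm⟩
  have hRTsymm : Symmetric (Relation.ReflTransGen (dAdj ends')) :=
    fun a b h => by
      induction h with
      | refl => exact Relation.ReflTransGen.refl
      | tail _ hs ih => exact Relation.ReflTransGen.head (hRsymm hs) ih
  -- endpoint analysis
  have hend1 : ∀ e : E,
      (ends' e).1 = some (ends e).1 ∨ ((ends' e).1 = none ∧ (ends e).1 = y) := by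
    intro e
    have h : (ends' e).1.getD y = (ends e).1 := by
      conv_rhs => rw [← hproj e]
    cases h1 : (ends' e).1 with
    | none => right; rw [h1] at h; exact ⟨rfl, h.symm⟩
    | some a => left; rw [← h, h1]; rfl
  have hend2 : ∀ e : E,
      (ends' e).2 = some (ends e).2 ∨ ((ends' e).2 = none ∧ (ends e).2 = y) := by
    intro e
    have h : (ends' e).2.getD y = (ends e).2 := by
      conv_rhs => rw [← hproj e]
    cases h1 : (ends' e).2 with
    | none => right; rw [h1] at h; exact ⟨rfl, h.symm⟩
    | some a => left; rw [← h, h1]; rfl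
  -- an edge with no moved endpoint keeps its ends
  have hkeep' : ∀ e : E, (ends' e).1 ≠ none → (ends' e).2 ≠ none →
      ends' e = (some (ends e).1, some (ends e).2) := by
    intro e h1 h2
    rcases hend1 e with ha | ha
    · rcases hend2 e with hb | hb
      · exact Prod.ext ha hb
      · exact absurd hb.1 h2
    · exact absurd ha.1 h1
  -- an edge between two non-`y` vertices keeps its ends
  have hkeep : ∀ (e : E) (a b : V), ends e = (a, b) → a ≠ y → b ≠ y →
      ends' e = (some a, some b) := by
    intro e a b he ha hb
    have h1 : (ends' e).1 ≠ none := by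
      rcases hend1 e with h | h
      · rw [h]; simp
      · rw [he] at h; exact absurd h.2 ha
    have h2 : (ends' e).2 ≠ none := by
      rcases hend2 e with h | h
      · rw [h]; simp
      · rw [he] at h; exact absurd h.2 hb
    rw [hkeep' e h1 h2, he]
  -- lifting paths that avoid `y`
  have hlift : ∀ u v : V, dReachAvoid ends y u v →
      Relation.ReflTransGen (dAdj ends') (some u) (some v) := by
    intro u v h
    induction h with
    | refl => exact Relation.ReflTransGen.refl
    | tail _ hstep ih =>
      obtain ⟨hb, hc, e, he⟩ := hstep
      refine ih.tail ⟨e, ?_⟩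
      rcases he with he | he
      · exact Or.inl (hkeep e _ _ he hb hc)
      · exact Or.inr (hkeep e _ _ he hc hb)
  -- key step: `none` reaches `some y`
  have main : ∀ b : V, b ≠ y → dAdj ends' none (some b) → (∃ e, dJoinsComp ends y e b) →
      Relation.ReflTransGen (dAdj ends') none (some y) := by
    intro b hb hadj ⟨e0, he0⟩
    -- there is an unmoved edge joining `y` to the component of `b`
    have hkey : ∃ e' : E, dJoinsComp ends y e' b ∧
        ¬((ends' e').1 = none ∨ (ends' e').2 = none) := by
      by_contra hc
      push_neg at hc
      have hcard : Nat.card {e : E // dJoinsComp ends y e b ∧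
          ((ends' e).1 = none ∨ (ends' e).2 = none)}
          = Nat.card {e : E // dJoinsComp ends y e b} :=
        Nat.card_congr (Equiv.subtypeEquivRight (fun e =>
          ⟨fun h => h.1, fun h => ⟨h, hc e h⟩⟩))
      have hpos : 0 < Nat.card {e : E // dJoinsComp ends y e b} := by
        haveI : Nonempty {e : E // dJoinsComp ends y e b} := ⟨⟨e0, he0⟩⟩
        exact Nat.card_pos
      have := hhalf b hb
      omega
    obtain ⟨e', ⟨u, hu, hor, hreach⟩, hnm⟩ := hkey
    push_neg at hnm
    have he' : ends' e' = (some (ends e').1, some (ends e').2) := hkeep' e' hnm.1 hnm.2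
    have hadj2 : dAdj ends' (some u) (some y) := by
      rcases hor with h | h
      · exact ⟨e', Or.inr (by rw [he', h])⟩
      · exact ⟨e', Or.inl (by rw [he', h])⟩
    exact (Relation.ReflTransGen.single hadj).trans
      ((hRTsymm (hlift u b hreach)).trans (Relation.ReflTransGen.single hadj2))
  -- `none` reaches `some y`
  have hnone : Relation.ReflTransGen (dAdj ends') none (some y) := by
    have hne : Nonempty {e : E // (ends' e).1 = none} ∨
        Nonempty {e : E // (ends' e).2 = none} := by
      by_contra hc
      push_neg at hc
      haveI h1 : IsEmpty {e : E // (ends' e).1 = none} := hc.1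
      haveI h2 : IsEmpty {e : E // (ends' e).2 = none} := hc.2
      rw [Nat.card_of_isEmpty, Nat.card_of_isEmpty] at hposMoved
      omega
    rcases hne with ⟨⟨e, he⟩⟩ | ⟨⟨e, he⟩⟩
    · have h1 : (ends e).1 = y := by
        rcases hend1 e with h | h
        · rw [he] at h; exact absurd h.symm (by simp)
        · exact h.2
      have h2 : (ends' e).2 = some (ends e).2 := by
        rcases hend2 e with h | h
        · exact h
        · exact absurd ⟨he, h.1⟩ (hone e)
      set b := (ends e).2 with hbdef
      have hadj : dAdj ends' none (some b) := by
        refine ⟨e, Or.inl ?_⟩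
        rw [Prod.ext_iff]; exact ⟨he, h2⟩
      by_cases hb : b = y
      · exact Relation.ReflTransGen.single (hb ▸ hadj)
      · refine main b hb hadj ⟨e, b, hb, Or.inl ?_, Relation.ReflTransGen.refl⟩
        rw [Prod.ext_iff]; exact ⟨h1, rfl⟩
    · have h1 : (ends e).2 = y := by
        rcases hend2 e with h | h
        · rw [he] at h; exact absurd h.symm (by simp)
        · exact h.2
      have h2 : (ends' e).1 = some (ends e).1 := by
        rcases hend1 e with h | h
        · exact h
        · exact absurd ⟨h.1, he⟩ (hone e)
      set b := (ends e).1 with hbdef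
      have hadj : dAdj ends' none (some b) := by
        refine ⟨e, Or.inr ?_⟩
        rw [Prod.ext_iff]; exact ⟨h2, he⟩
      by_cases hb : b = y
      · exact Relation.ReflTransGen.single (hb ▸ hadj)
      · refine main b hb hadj ⟨e, b, hb, Or.inr ?_, Relation.ReflTransGen.refl⟩
        rw [Prod.ext_iff]; exact ⟨rfl, h1⟩
  -- every original vertex reaches `some y`
  have hall : ∀ v : V, Relation.ReflTransGen (dAdj ends') (some v) (some y) := by
    intro v
    induction hconn v y using Relation.ReflTransGen.head_induction_on with
    | refl => exact Relation.ReflTransGen.refl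
    | head h' _ ih =>
      rename_i a c _
      by_cases ha : a = y
      · subst ha; exact Relation.ReflTransGen.refl
      · obtain ⟨e, he⟩ := h'
        by_cases hc : c = y
        · rw [hc] at he
          -- edge between a (≠ y) and y
          rcases he with h | h
          · -- ends e = (a, y)
            have h1 : (ends' e).1 = some a := by
              rcases hend1 e with hh | hh
              · rw [hh, h]
              · rw [h] at hh; exact absurd hh.2 ha
            rcases hend2 e with hh | hh
            · rw [h] at hh
              exact Relation.ReflTransGen.single ⟨e, Or.inl (Prod.ext h1 hh)⟩
            · have : dAdj ends' (some a) none := ⟨e, Or.inl (Prod.ext h1 hh.1)⟩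
              exact (Relation.ReflTransGen.single this).trans hnone
          · -- ends e = (y, a)
            have h2 : (ends' e).2 = some a := by
              rcases hend2 e with hh | hh
              · rw [hh, h]
              · rw [h] at hh; exact absurd hh.2 ha
            rcases hend1 e with hh | hh
            · rw [h] at hh
              exact Relation.ReflTransGen.single ⟨e, Or.inr (Prod.ext hh h2)⟩
            · have : dAdj ends' (some a) none := ⟨e, Or.inr (Prod.ext hh.1 h2)⟩
              exact (Relation.ReflTransGen.single this).trans hnone
        · -- both a, c ≠ y
          have : dAdj ends' (some a) (some c) := by
            rcases he with h | h
            · exact ⟨e, Or.inl (hkeep e a c h ha hc)⟩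
            · exact ⟨e, Or.inr (hkeep e c a h hc ha)⟩
          exact ih.head this
  -- conclude
  intro x z
  have hx : Relation.ReflTransGen (dAdj ends') x (some y) := by
    cases x with
    | none => exact hnone
    | some v => exact hall v
  have hz : Relation.ReflTransGen (dAdj ends') z (some y) := by
    cases z with
    | none => exact hnone
    | some v => exact hall v
  exact hx.trans (hRTsymm hz)
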